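/- Let H be a finite group, 𝒵 its set of cyclic subgroups, f(Z) = ∑_{W ∈ 𝒵, Z ≤ W} μ(|W:Z|), and γ: H → ℚ_{>0} any function. Then ∏_{x ∈ H} γ(x) = ∏_{Z ∈ 𝒵} (∏_{z ∈ Z} γ(z))^{f(Z)} as an identity of positive rationals. -/

import Mathlib

open scoped Classical

/-- `f(Z) = ∑_{W cyclic, Z ≤ W} μ(|W : Z|)`, the Möbius-type weight attached to a
cyclic subgroup `Z` of the finite group `H`. -/
noncomputable def moebiusWeight {H : Type*} [Group H] [Fintype H] (Z : Subgroup H) : ℤ :=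
  ∑ W ∈ Finset.univ.filter (fun W : Subgroup H => IsCyclic W ∧ Z ≤ W),
    ArithmeticFunction.moebius (Nat.card W / Nat.card Z)

lemma zpowers_isCyclic {G : Type*} [Group G] (g : G) : IsCyclic (Subgroup.zpowers g) := by
  refine ⟨⟨⟨g, Subgroup.mem_zpowers g⟩, fun x => ?_⟩⟩
  obtain ⟨k, hk⟩ := x.2
  exact ⟨k, Subtype.ext (by simpa using hk)⟩

lemma mem_of_pow_card_eq_one {α : Type*} [Group α] [Fintype α] [IsCyclic α] (C : Subgroup α)
    {x : α} (h : x ^ Nat.card C = 1) : x ∈ C := by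
  classical
  set c := Nat.card C with hc
  have hc0 : 0 < c := Nat.card_pos
  set F := Finset.univ.filter (fun w : α => w ^ c = 1) with hF
  have hFle : F.card ≤ c := IsCyclic.card_pow_eq_one_le hc0
  have hsub : (C : Set α).toFinset ⊆ F := by
    intro w hw
    simp only [Set.mem_toFinset, SetLike.mem_coe] at hw
    simp only [hF, Finset.mem_filter, Finset.mem_univ, true_and]
    have : (⟨w, hw⟩ : C) ^ c = 1 := by rw [hc]; exact pow_card_eq_one'
    exact congrArg Subtype.val this
  have hcard : (C : Set α).toFinset.card = c := by
    rw [Set.toFinset_card, hc, Nat.card_eq_fintype_card]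
    congr 1
  have : (C : Set α).toFinset = F :=
    Finset.eq_of_subset_of_card_le hsub (hcard ▸ hFle)
  have hx : x ∈ F := by simp [hF, h]
  rw [← this] at hx
  simpa using hx

lemma le_of_card_dvd_card {α : Type*} [Group α] [Fintype α] [IsCyclic α] (A B : Subgroup α)
    (h : Nat.card A ∣ Nat.card B) : A ≤ B := by
  obtain ⟨b, hb⟩ := IsCyclic.exists_ofOrder_eq_natCard (α := B)
  set a := Nat.card A with ha
  set n := Nat.card B with hn
  have ha0 : 0 < a := Nat.card_pos
  have hn0 : 0 < n := Nat.card_pos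
  have horder : orderOf (b : α) = n := by
    rw [← hb]; exact (orderOf_injective B.subtype Subtype.val_injective b).symm ▸ rfl
  set C : Subgroup α := Subgroup.zpowers ((b : α) ^ (n / a)) with hC
  have hCB : C ≤ B := by
    rw [hC, Subgroup.zpowers_le]
    exact pow_mem b.2 _
  have hcardC : Nat.card C = a := by
    rw [hC, Nat.card_zpowers, orderOf_pow, horder, Nat.gcd_eq_right (Nat.div_dvd_of_dvd h),
      Nat.div_div_self h hn0.ne']
  intro x hx
  refine hCB (mem_of_pow_card_eq_one C ?_)
  rw [hcardC, ha]
  have : (⟨x, hx⟩ : A) ^ Nat.card A = 1 := pow_card_eq_one'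
  exact congrArg Subtype.val this

lemma eq_of_card_eq_card {α : Type*} [Group α] [Fintype α] [IsCyclic α] (A B : Subgroup α)
    (h : Nat.card A = Nat.card B) : A = B :=
  le_antisymm (le_of_card_dvd_card A B h.dvd) (le_of_card_dvd_card B A h.symm.dvd)

lemma card_subgroupOf_eq {H : Type*} [Group H] {A W : Subgroup H} (h : A ≤ W) :
    Nat.card (A.subgroupOf W) = Nat.card A :=
  Nat.card_congr (Subgroup.subgroupOfEquivOfLe h).toEquiv

lemma card_map_subtype {H : Type*} [Group H] (W : Subgroup H) (Z : Subgroup W) :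
    Nat.card (Z.map W.subtype) = Nat.card Z :=
  (Nat.card_congr (Subgroup.equivMapOfInjective Z W.subtype Subtype.val_injective).toEquiv).symm

lemma eq_of_le_le_card {H : Type*} [Group H] [Fintype H] {W Z₁ Z₂ : Subgroup H} (hW : IsCyclic W)
    (h1 : Z₁ ≤ W) (h2 : Z₂ ≤ W) (h : Nat.card Z₁ = Nat.card Z₂) : Z₁ = Z₂ := by
  have key : Z₁.subgroupOf W = Z₂.subgroupOf W :=
    eq_of_card_eq_card _ _ (by rw [card_subgroupOf_eq h1, card_subgroupOf_eq h2, h])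
  have := congrArg (Subgroup.map W.subtype) key
  rwa [Subgroup.subgroupOf_map_subtype, Subgroup.subgroupOf_map_subtype,
    inf_of_le_left h1, inf_of_le_left h2] at this

lemma moebius_inner_sum {H : Type*} [Group H] [Fintype H] (x : H) (W : Subgroup H)
    (hW : IsCyclic W) (hx : x ∈ W) :
    ∑ Z ∈ Finset.univ.filter (fun Z : Subgroup H => Subgroup.zpowers x ≤ Z ∧ Z ≤ W),
      ArithmeticFunction.moebius (Nat.card W / Nat.card Z)
    = if W = Subgroup.zpowers x then 1 else 0 := by
  classical
  set n := Nat.card W with hn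
  set m := Nat.card (Subgroup.zpowers x) with hm
  have hxW : Subgroup.zpowers x ≤ W := Subgroup.zpowers_le.mpr hx
  have hmn : m ∣ n := Subgroup.card_dvd_of_le hxW
  have hn0 : 0 < n := Nat.card_pos
  have hm0 : 0 < m := Nat.card_pos
  have hnm0 : n / m ≠ 0 := Nat.div_ne_zero_iff_of_dvd hmn |>.mpr ⟨hn0.ne', hm0.ne'⟩
  obtain ⟨g, hg⟩ := IsCyclic.exists_ofOrder_eq_natCard (α := W)
  have step1 :
      ∑ Z ∈ Finset.univ.filter (fun Z : Subgroup H => Subgroup.zpowers x ≤ Z ∧ Z ≤ W),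
        ArithmeticFunction.moebius (Nat.card W / Nat.card Z)
      = ∑ d ∈ (n / m).divisors, ArithmeticFunction.moebius d := by
    refine Finset.sum_nbij' (fun Z => n / Nat.card Z)
      (fun d => Subgroup.map W.subtype (Subgroup.zpowers (g ^ d))) ?_ ?_ ?_ ?_ ?_
    · intro Z hZ
      simp only [Finset.mem_filter, Finset.mem_univ, true_and] at hZ
      obtain ⟨h1, h2⟩ := hZ
      have hcd : Nat.card Z ∣ n := Subgroup.card_dvd_of_le h2
      have hmc : m ∣ Nat.card Z := Subgroup.card_dvd_of_le h1
      rw [Nat.mem_divisors]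
      refine ⟨?_, hnm0⟩
      obtain ⟨l, hl⟩ := hcd
      obtain ⟨k, hk⟩ := hmc
      have hc0 : 0 < Nat.card Z := Nat.card_pos
      have h1' : n / Nat.card Z = l := by rw [hl, Nat.mul_div_cancel_left _ hc0]
      have h2' : n / m = k * l := by
        rw [hl, hk, mul_assoc, Nat.mul_div_cancel_left _ hm0]
      show n / Nat.card Z ∣ n / m
      rw [h1', h2']
      exact ⟨k, mul_comm k l⟩
    · intro d hd
      rw [Nat.mem_divisors] at hd
      have hd0 : 0 < d := Nat.pos_of_ne_zero (by rintro rfl; exact absurd hd.1 (by simpa using hnm0))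
      have hdn : d ∣ n := hd.1.trans (Nat.div_dvd_of_dvd hmn)
      have hcard : Nat.card (Subgroup.zpowers (g ^ d)) = n / d := by
        rw [Nat.card_zpowers, orderOf_pow, hg, ← hn, Nat.gcd_eq_right hdn]
      have hcard' : Nat.card (Subgroup.map W.subtype (Subgroup.zpowers (g ^ d))) = n / d := by
        rw [card_map_subtype, hcard]
      simp only [Finset.mem_filter, Finset.mem_univ, true_and]
      constructor
      · -- zpowers x ≤ map
        have hA : Nat.card ((Subgroup.zpowers x).subgroupOf W) = m := by
          rw [card_subgroupOf_eq hxW]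
        have hmd : m ∣ n / d := by
          obtain ⟨t, ht⟩ := hd.1
          obtain ⟨u, hu⟩ := hdn
          refine ⟨t, ?_⟩
          have : n = d * (m * t) := by
            rw [← Nat.div_mul_cancel hmn, ht]; ring
          rw [hu] at this
          have := Nat.eq_of_mul_eq_mul_left hd0 this
          rw [hu, Nat.mul_div_cancel_left _ hd0, this]
        have hle : (Subgroup.zpowers x).subgroupOf W ≤ Subgroup.zpowers (g ^ d) :=
          le_of_card_dvd_card _ _ (by rw [hA, hcard]; exact hmd)
        have := Subgroup.map_mono (f := W.subtype) hle
        rwa [Subgroup.subgroupOf_map_subtype, inf_of_le_left hxW] at this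
      · exact Subgroup.map_subtype_le _
    · intro Z hZ
      simp only [Finset.mem_filter, Finset.mem_univ, true_and] at hZ
      obtain ⟨h1, h2⟩ := hZ
      have hcd : Nat.card Z ∣ n := Subgroup.card_dvd_of_le h2
      set d := n / Nat.card Z with hdd
      have hdn : d ∣ n := Nat.div_dvd_of_dvd hcd
      have hcard' : Nat.card (Subgroup.map W.subtype (Subgroup.zpowers (g ^ d))) = n / d := by
        rw [card_map_subtype, Nat.card_zpowers, orderOf_pow, hg, ← hn, Nat.gcd_eq_right hdn]
      refine eq_of_le_le_card hW (Subgroup.map_subtype_le _) h2 ?_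
      rw [hcard', hdd, Nat.div_div_self hcd hn0.ne']
    · intro d hd
      rw [Nat.mem_divisors] at hd
      have hd0 : 0 < d := Nat.pos_of_ne_zero (by rintro rfl; exact absurd hd.1 (by simpa using hnm0))
      have hdn : d ∣ n := hd.1.trans (Nat.div_dvd_of_dvd hmn)
      have hcard' : Nat.card (Subgroup.map W.subtype (Subgroup.zpowers (g ^ d))) = n / d := by
        rw [card_map_subtype, Nat.card_zpowers, orderOf_pow, hg, ← hn, Nat.gcd_eq_right hdn]
      show n / Nat.card (Subgroup.map W.subtype (Subgroup.zpowers (g ^ d))) = d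
      rw [hcard', Nat.div_div_self hdn hn0.ne']
    · intro Z hZ
      rfl
  rw [step1, ← ArithmeticFunction.coe_mul_zeta_apply, ArithmeticFunction.moebius_mul_coe_zeta,
    ArithmeticFunction.one_apply]
  congr 1
  rw [eq_iff_iff]
  constructor
  · intro h1
    have hmeq : m = n := by
      have := Nat.div_mul_cancel hmn
      rw [h1, one_mul] at this
      exact this
    have : (Subgroup.zpowers x).subgroupOf W = ⊤ :=
      eq_of_card_eq_card _ _ (by rw [card_subgroupOf_eq hxW, Subgroup.card_top, ← hm, ← hn, hmeq])
    exact le_antisymm (Subgroup.subgroupOf_eq_top.mp this) hxW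
  · rintro rfl
    exact Nat.div_self hn0

lemma isCyclic_of_le {H : Type*} [Group H] {Z W : Subgroup H} (h : Z ≤ W) (hW : IsCyclic W) :
    IsCyclic Z :=
  isCyclic_of_surjective (Subgroup.subgroupOfEquivOfLe h)
    (Subgroup.subgroupOfEquivOfLe h).surjective

lemma key_sum {H : Type*} [Group H] [Fintype H] (x : H) :
    ∑ Z ∈ Finset.univ.filter (fun Z : Subgroup H => IsCyclic Z ∧ x ∈ Z), moebiusWeight Z = 1 := by
  classical
  have swap :
      ∑ Z ∈ Finset.univ.filter (fun Z : Subgroup H => IsCyclic Z ∧ x ∈ Z), moebiusWeight Z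
      = ∑ W : Subgroup H, ∑ Z : Subgroup H,
          if (IsCyclic W ∧ x ∈ W) ∧ (Subgroup.zpowers x ≤ Z ∧ Z ≤ W) then
            ArithmeticFunction.moebius (Nat.card W / Nat.card Z) else 0 := by
    unfold moebiusWeight
    rw [Finset.sum_filter]
    have step : ∀ Z : Subgroup H,
        (if IsCyclic Z ∧ x ∈ Z then
          ∑ W ∈ Finset.univ.filter (fun W : Subgroup H => IsCyclic W ∧ Z ≤ W),
            ArithmeticFunction.moebius (Nat.card W / Nat.card Z) else 0)
        = ∑ W : Subgroup H,
            if (IsCyclic W ∧ x ∈ W) ∧ (Subgroup.zpowers x ≤ Z ∧ Z ≤ W) then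
              ArithmeticFunction.moebius (Nat.card W / Nat.card Z) else 0 := by
      intro Z
      by_cases hZ : IsCyclic Z ∧ x ∈ Z
      · rw [if_pos hZ, Finset.sum_filter]
        refine Finset.sum_congr rfl fun W _ => ?_
        congr 1
        rw [eq_iff_iff]
        constructor
        · rintro ⟨hW, hZW⟩
          exact ⟨⟨hW, hZW hZ.2⟩, Subgroup.zpowers_le.mpr hZ.2, hZW⟩
        · rintro ⟨⟨hW, _⟩, _, hZW⟩
          exact ⟨hW, hZW⟩
      · rw [if_neg hZ, eq_comm]
        refine Finset.sum_eq_zero fun W _ => ?_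
        rw [if_neg]
        rintro ⟨⟨hW, _⟩, hxZ, hZW⟩
        exact hZ ⟨isCyclic_of_le hZW hW, hxZ (Subgroup.mem_zpowers x)⟩
    rw [Finset.sum_congr rfl fun Z _ => step Z, Finset.sum_comm]
  rw [swap]
  have inner : ∀ W : Subgroup H,
      (∑ Z : Subgroup H,
        if (IsCyclic W ∧ x ∈ W) ∧ (Subgroup.zpowers x ≤ Z ∧ Z ≤ W) then
          ArithmeticFunction.moebius (Nat.card W / Nat.card Z) else 0)
      = if W = Subgroup.zpowers x then 1 else 0 := by
    intro W
    by_cases hW : IsCyclic W ∧ x ∈ W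
    · have : (∑ Z : Subgroup H,
          if (IsCyclic W ∧ x ∈ W) ∧ (Subgroup.zpowers x ≤ Z ∧ Z ≤ W) then
            ArithmeticFunction.moebius (Nat.card W / Nat.card Z) else 0)
          = ∑ Z ∈ Finset.univ.filter
              (fun Z : Subgroup H => Subgroup.zpowers x ≤ Z ∧ Z ≤ W),
              ArithmeticFunction.moebius (Nat.card W / Nat.card Z) := by
        rw [Finset.sum_filter]
        exact Finset.sum_congr rfl fun Z _ => by simp [hW]
      rw [this, moebius_inner_sum x W hW.1 hW.2]
    · have h0 : (∑ Z : Subgroup H,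
          if (IsCyclic W ∧ x ∈ W) ∧ (Subgroup.zpowers x ≤ Z ∧ Z ≤ W) then
            ArithmeticFunction.moebius (Nat.card W / Nat.card Z) else 0) = 0 :=
        Finset.sum_eq_zero fun Z _ => by
          rw [if_neg]; rintro ⟨h1, _⟩; exact hW h1
      rw [h0, if_neg]
      rintro rfl
      exact hW ⟨zpowers_isCyclic x, Subgroup.mem_zpowers x⟩
  rw [Finset.sum_congr rfl fun W _ => inner W]
  simp

lemma zpow_sum₀ {a : ℚ} (ha : a ≠ 0) {ι : Type*} (s : Finset ι) (f : ι → ℤ) :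
    ∏ i ∈ s, a ^ f i = a ^ (∑ i ∈ s, f i) := by
  classical
  induction s using Finset.induction with
  | empty => simp
  | insert _ _ h ih => rw [Finset.prod_insert h, Finset.sum_insert h, ih, zpow_add₀ ha]

/-- For any positive-valued `γ : H → ℚ`,
`∏_{x ∈ H} γ(x) = ∏_{Z cyclic ≤ H} (∏_{z ∈ Z} γ(z))^{f(Z)}` in the positive rationals. -/
theorem prod_eq_prod_cyclic_moebiusWeight (H : Type) [Group H] [Fintype H]
    (γ : H → ℚ) (hγ : ∀ x, 0 < γ x) :
    ∏ x : H, γ x =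
    ∏ Z ∈ Finset.univ.filter (fun Z : Subgroup H => IsCyclic Z),
      (∏ z : Z, γ (z : H)) ^ moebiusWeight Z := by
  classical
  calc ∏ x : H, γ x
      = ∏ x : H, γ x ^ (∑ Z ∈ Finset.univ.filter
          (fun Z : Subgroup H => IsCyclic Z ∧ x ∈ Z), moebiusWeight Z) := by
        refine Finset.prod_congr rfl fun x _ => ?_
        rw [key_sum, zpow_one]
    _ = ∏ x : H, ∏ Z ∈ Finset.univ.filter
          (fun Z : Subgroup H => IsCyclic Z ∧ x ∈ Z), γ x ^ moebiusWeight Z := by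
        exact Finset.prod_congr rfl fun x _ => (zpow_sum₀ (hγ x).ne' _ _).symm
    _ = ∏ x : H, ∏ Z ∈ Finset.univ.filter (fun Z : Subgroup H => IsCyclic Z),
          (if x ∈ Z then γ x ^ moebiusWeight Z else 1) := by
        refine Finset.prod_congr rfl fun x _ => ?_
        rw [← Finset.prod_filter, Finset.filter_filter]
    _ = ∏ Z ∈ Finset.univ.filter (fun Z : Subgroup H => IsCyclic Z),
          ∏ x : H, (if x ∈ Z then γ x ^ moebiusWeight Z else 1) := Finset.prod_comm
    _ = ∏ Z ∈ Finset.univ.filter (fun Z : Subgroup H => IsCyclic Z),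
          (∏ z : Z, γ (z : H)) ^ moebiusWeight Z := by
        refine Finset.prod_congr rfl fun Z _ => ?_
        rw [← Finset.prod_filter, Finset.prod_zpow]
        congr 1
        exact (Finset.prod_subtype _ (fun x => by simp) γ)
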